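/- Let G be an abelian group and p a prime. If the p-torsion subgroup Tor_p(G) has bounded exponent and the quotient G/Tor_p(G) is not p-divisible, then G is not co-Hopfian. -/

import Mathlib

open Pointwise

-- membership in pointwise smul of a submodule
lemma mem_psmul {M : Type*} [AddCommGroup M] (a : ℤ) (S : Submodule ℤ M) (x : M) :
    x ∈ a • S ↔ ∃ s ∈ S, a • s = x := by
  rw [← SetLike.mem_coe, Submodule.coe_pointwise_smul]
  exact Set.mem_smul_set

-- Splitting lemma: a bounded "pure" submodule of a bounded module is complemented.
lemma splitting (p : ℕ) (hp : p.Prime) (M : Type*) [AddCommGroup M] :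
    ∀ (k : ℕ) (N S : Submodule ℤ M), S ≤ N → (∀ x ∈ N, ((p : ℤ))^k • x = 0) →
      (∀ (j : ℕ), ∀ x ∈ S, x ∈ ((p : ℤ)^j • N) → x ∈ ((p : ℤ)^j • S)) →
      ∃ C : Submodule ℤ M, C ≤ N ∧ S ⊓ C = ⊥ ∧ S ⊔ C = N := by
  intro k
  induction k with
  | zero =>
    intro N S hSN hbd _
    have hN : N = ⊥ := by
      apply le_bot_iff.mp
      intro x hx
      have := hbd x hx
      simpa using this
    refine ⟨⊥, bot_le, by simp, ?_⟩
    rw [hN] at hSN ⊢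
    simp [le_bot_iff.mp hSN]
  | succ k ih =>
    intro N S hSN hbd hpure
    set N' : Submodule ℤ M := (p : ℤ) • N with hN'
    set S' : Submodule ℤ M := (p : ℤ) • S with hS'
    have hS'N' : S' ≤ N' := by
      intro x hx
      obtain ⟨s, hs, rfl⟩ := (mem_psmul _ _ _).mp hx
      exact Submodule.smul_mem_pointwise_smul _ _ _ (hSN hs)
    have hS'S : S' ≤ S := by
      intro x hx
      obtain ⟨s, hs, rfl⟩ := (mem_psmul _ _ _).mp hx
      exact S.smul_mem _ hs
    have hbd' : ∀ x ∈ N', ((p : ℤ))^k • x = 0 := by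
      intro x hx
      obtain ⟨y, hy, rfl⟩ := (mem_psmul _ _ _).mp hx
      rw [smul_smul, ← pow_succ]
      exact hbd y hy
    have hpure' : ∀ (j : ℕ), ∀ x ∈ S', x ∈ ((p : ℤ)^j • N') → x ∈ ((p : ℤ)^j • S') := by
      intro j x hxS' hxN'
      have h1 : x ∈ ((p : ℤ)^(j+1) • N) := by
        rwa [pow_succ, mul_smul] at *
      have h2 : x ∈ ((p : ℤ)^(j+1) • S) := hpure (j+1) x (hS'S hxS') h1
      rwa [pow_succ, mul_smul] at h2
    obtain ⟨D, hDN', hSD, hsup⟩ := ih N' S' hS'N' hbd' hpure'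
    -- G₁ = {x ∈ N | p • x ∈ D}
    set G₁ : Submodule ℤ M := N ⊓ Submodule.comap (LinearMap.lsmul ℤ M (p : ℤ)) D with hG₁
    have memG₁ : ∀ x : M, x ∈ G₁ ↔ x ∈ N ∧ (p : ℤ) • x ∈ D := by
      intro x
      simp [hG₁, Submodule.mem_comap, LinearMap.lsmul_apply]
    set S₁ : Submodule ℤ M := S ⊓ G₁ with hS₁
    have hG₁N : G₁ ≤ N := inf_le_left
    -- claim (a): N ≤ S ⊔ G₁
    have ha : N ≤ S ⊔ G₁ := by
      intro x hx
      have hpx : (p : ℤ) • x ∈ S' ⊔ D := by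
        rw [hsup]
        exact Submodule.smul_mem_pointwise_smul x _ N hx
      obtain ⟨u, hu, d, hd, hud⟩ := Submodule.mem_sup.mp hpx
      obtain ⟨s, hs, rfl⟩ := (mem_psmul _ _ _).mp hu
      refine Submodule.mem_sup.mpr ⟨s, hs, x - s, ?_, by abel⟩
      rw [memG₁]
      constructor
      · exact N.sub_mem hx (hSN hs)
      · have : (p : ℤ) • (x - s) = d := by
          rw [smul_sub]
          rw [← hud]; abel
        rw [this]; exact hd
    -- p•G₁ ≤ G₁
    have hpG₁ : (p : ℤ) • G₁ ≤ G₁ := by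
      intro x hx
      obtain ⟨y, hy, rfl⟩ := (mem_psmul _ _ _).mp hx
      rw [memG₁] at hy ⊢
      exact ⟨N.smul_mem _ hy.1, D.smul_mem _ hy.2⟩
    -- (b): S₁ ⊓ p•G₁ = ⊥
    have hb : ∀ y : M, y ∈ S₁ → y ∈ (p : ℤ) • G₁ → y = 0 := by
      intro y hyS₁ hyp
      obtain ⟨hyS, hyG₁⟩ := Submodule.mem_inf.mp hyS₁
      obtain ⟨z, hz, rfl⟩ := (mem_psmul _ _ _).mp hyp
      rw [memG₁] at hz
      have h1 : (p : ℤ) • z ∈ S' := by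
        have hmem : (p : ℤ) • z ∈ (p : ℤ) • N := Submodule.smul_mem_pointwise_smul z _ N hz.1
        have := hpure 1 _ hyS (by rw [pow_one]; exact hmem)
        rw [pow_one] at this
        exact this
      have h2 : (p : ℤ) • z ∈ D := hz.2
      have : (p : ℤ) • z ∈ S' ⊓ D := Submodule.mem_inf.mpr ⟨h1, h2⟩
      rw [hSD] at this
      simpa using this
    -- Zorn: maximal C with p•G₁ ≤ C ≤ G₁ and C ⊓ S₁ = ⊥
    set 𝒞 : Set (Submodule ℤ M) :=
      {C | (p : ℤ) • G₁ ≤ C ∧ C ≤ G₁ ∧ ∀ y ∈ C, y ∈ S₁ → y = 0} with h𝒞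
    have hbase : (p : ℤ) • G₁ ∈ 𝒞 :=
      ⟨le_rfl, hpG₁, fun y hy hy' => hb y hy' hy⟩
    obtain ⟨C, -, hCmax⟩ := zorn_le_nonempty₀ 𝒞 (by
      intro c hc hchain y hy
      refine ⟨sSup c, ⟨?_, ?_, ?_⟩, fun z hz => le_sSup hz⟩
      · exact le_trans (hc hy).1 (le_sSup hy)
      · exact sSup_le fun z hz => (hc hz).2.1
      · intro x hx hxS₁
        obtain ⟨z, hz, hxz⟩ := (Submodule.mem_sSup_of_directed ⟨y, hy⟩
          (hchain.directedOn)).mp hx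
        exact (hc hz).2.2 x hxz hxS₁) _ hbase
    obtain ⟨hC1, hC2, hC3⟩ := hCmax.prop
    -- G₁ ≤ S₁ ⊔ C
    have hkey : G₁ ≤ S₁ ⊔ C := by
      intro x hx
      by_cases hxC : x ∈ C
      · exact Submodule.mem_sup_right hxC
      set C' : Submodule ℤ M := C ⊔ Submodule.span ℤ {x} with hC'
      have hC'G₁ : C' ≤ G₁ := sup_le hC2 (by
        rw [Submodule.span_le, Set.singleton_subset_iff]; exact hx)
      have : ¬ (∀ y ∈ C', y ∈ S₁ → y = 0) := by
        intro hdisj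
        have hC'in : C' ∈ 𝒞 := ⟨le_trans hC1 le_sup_left, hC'G₁, hdisj⟩
        have : C' ≤ C := hCmax.le_of_ge hC'in le_sup_left
        exact hxC (this (Submodule.mem_sup_right (Submodule.mem_span_singleton_self x)))
      push_neg at this
      obtain ⟨y, hyC', hyS₁, hyne⟩ := this
      obtain ⟨cc, hcc, w, hw, hccw⟩ := Submodule.mem_sup.mp hyC'
      obtain ⟨a, rfl⟩ := Submodule.mem_span_singleton.mp hw
      by_cases hpa : (p : ℤ) ∣ a
      · obtain ⟨b, rfl⟩ := hpa
        have hax : ((p : ℤ) * b) • x ∈ C := by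
          rw [mul_smul]
          exact hC1 (Submodule.smul_mem_pointwise_smul _ _ _ (G₁.smul_mem b hx))
        have : y ∈ C := by rw [← hccw]; exact C.add_mem hcc hax
        exact absurd (hC3 y this hyS₁) hyne
      · -- a coprime to p
        have hpZ : Prime (p : ℤ) := Int.prime_iff_natAbs_prime.mpr (by simpa using hp)
        have hcop : IsCoprime a (p : ℤ) :=
          ((Prime.coprime_iff_not_dvd hpZ).mpr hpa).symm
        obtain ⟨u, v, huv⟩ := hcop
        have hx' : x = u • (a • x) + v • ((p : ℤ) • x) := by
          rw [smul_smul, smul_smul, ← add_smul]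
          rw [huv, one_smul]
        have h1 : a • x ∈ S₁ ⊔ C := by
          have : a • x = y - cc := by rw [← hccw]; abel
          rw [this]
          exact Submodule.sub_mem _ (Submodule.mem_sup_left hyS₁) (Submodule.mem_sup_right hcc)
        have h2 : (p : ℤ) • x ∈ S₁ ⊔ C :=
          Submodule.mem_sup_right (hC1 (Submodule.smul_mem_pointwise_smul _ _ _ hx))
        rw [hx']
        exact Submodule.add_mem _ ((S₁ ⊔ C).smul_mem u h1) ((S₁ ⊔ C).smul_mem v h2)
    refine ⟨C, le_trans hC2 hG₁N, ?_, ?_⟩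
    · apply le_bot_iff.mp
      intro z hz
      obtain ⟨hzS, hzC⟩ := Submodule.mem_inf.mp hz
      have hzS₁ : z ∈ S₁ := Submodule.mem_inf.mpr ⟨hzS, hC2 hzC⟩
      simpa using hC3 z hzC hzS₁
    · apply le_antisymm
      · exact sup_le hSN (le_trans hC2 hG₁N)
      · intro x hx
        have := ha hx
        obtain ⟨s, hs, g, hg, rfl⟩ := Submodule.mem_sup.mp this
        have hg' : g ∈ S₁ ⊔ C := hkey hg
        obtain ⟨s₁, hs₁, cc, hcc, rfl⟩ := Submodule.mem_sup.mp hg'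
        have : s + (s₁ + cc) = (s + s₁) + cc := by abel
        rw [this]
        exact Submodule.add_mem _
          (Submodule.mem_sup_left (S.add_mem hs (Submodule.mem_inf.mp hs₁).1))
          (Submodule.mem_sup_right hcc)

def IsCoHopfian (G : Type*) [AddCommGroup G] : Prop :=
  ∀ f : G →+ G, Function.Injective f → Function.Surjective f

theorem stmt_5 (G : Type*) [AddCommGroup G] (p : ℕ) (hp : p.Prime)
    (T : AddSubgroup G)
    (hT : ∀ g : G, g ∈ T ↔ ∃ n : ℕ, p ^ n • g = 0)
    (hbdd : ∃ n : ℕ, 0 < n ∧ ∀ t ∈ T, n • t = 0)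
    (hdiv : ¬ ∀ x : G ⧸ T, ∃ y : G ⧸ T, p • y = x) :
    ¬ IsCoHopfian G := by
  intro hco
  obtain ⟨n, hn, hbddn⟩ := hbdd
  have hcast : ∀ (m : ℕ) (g : G), (p : ℤ)^m • g = p ^ m • g := by
    intro m g
    rw [← Nat.cast_pow, natCast_zsmul]
  have hTZ : ∀ g : G, g ∈ T ↔ ∃ m : ℕ, (p : ℤ)^m • g = 0 := by
    intro g
    rw [hT]
    constructor <;> rintro ⟨m, hm⟩ <;> exact ⟨m, by rw [hcast] at *; exact hm⟩
  -- exponent bound p^n on T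
  have hk : ∀ t ∈ T, p ^ n • t = 0 := by
    intro t ht
    obtain ⟨m, hm⟩ := (hT t).mp ht
    have ho1 : addOrderOf t ∣ n := addOrderOf_dvd_of_nsmul_eq_zero (hbddn t ht)
    have ho2 : addOrderOf t ∣ p ^ m := addOrderOf_dvd_of_nsmul_eq_zero hm
    obtain ⟨a, ham, hoe⟩ := (Nat.dvd_prime_pow hp).mp ho2
    have hpa : p ^ a ≤ n := Nat.le_of_dvd hn (hoe ▸ ho1)
    have han : a ≤ n := le_trans (le_of_lt (Nat.lt_pow_self hp.one_lt : a < p ^ a)) hpa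
    have h0 : p ^ a • t = 0 := hoe ▸ addOrderOf_nsmul_eq_zero t
    calc p ^ n • t = (p ^ (n - a) * p ^ a) • t := by rw [← pow_add, Nat.sub_add_cancel han]
      _ = p ^ (n - a) • p ^ a • t := (smul_smul _ _ _).symm
      _ = 0 := by rw [h0, smul_zero]
  have hkZ : ∀ t ∈ T, (p : ℤ) ^ n • t = 0 := by
    intro t ht
    rw [hcast]
    exact hk t ht
  set Tm : Submodule ℤ G := AddSubgroup.toIntSubmodule T with hTm
  set P : Submodule ℤ G := (p : ℤ)^n • (⊤ : Submodule ℤ G) with hP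
  set Q := G ⧸ P with hQ
  set φ : Tm →ₗ[ℤ] Q := P.mkQ.comp Tm.subtype with hφ
  have hφinj : Function.Injective φ := by
    rw [← LinearMap.ker_eq_bot, LinearMap.ker_eq_bot']
    intro t htz
    have : (t : G) ∈ P := by
      have := htz
      rwa [hφ, LinearMap.comp_apply, Submodule.mkQ_apply, Submodule.Quotient.mk_eq_zero] at this
    obtain ⟨y, -, hy⟩ := (mem_psmul _ _ _).mp this
    have hyT : y ∈ T := by
      obtain ⟨m, hm⟩ := (hTZ (t : G)).mp t.2
      refine (hTZ y).mpr ⟨m + n, ?_⟩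
      rw [pow_add, mul_smul, hy, hm]
    have : (t : G) = 0 := by rw [← hy, hkZ y hyT]
    exact Subtype.ext this
  set S : Submodule ℤ Q := LinearMap.range φ with hS
  have hQbd : ∀ x : Q, (p : ℤ)^n • x = 0 := by
    intro x
    obtain ⟨y, rfl⟩ := Submodule.mkQ_surjective P x
    rw [Submodule.mkQ_apply, ← Submodule.Quotient.mk_smul, Submodule.Quotient.mk_eq_zero]
    exact Submodule.smul_mem_pointwise_smul y _ ⊤ trivial
  have hpureS : ∀ (j : ℕ), ∀ x ∈ S, x ∈ ((p : ℤ)^j • (⊤ : Submodule ℤ Q)) →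
      x ∈ ((p : ℤ)^j • S) := by
    intro j x hxS hxj
    rcases le_or_gt j n with hjn | hnj
    · obtain ⟨t, rfl⟩ := hxS
      obtain ⟨q, -, hq⟩ := (mem_psmul _ _ _).mp hxj
      obtain ⟨z, rfl⟩ := Submodule.mkQ_surjective P q
      have : (t : G) - (p : ℤ)^j • z ∈ P := by
        have h0 : P.mkQ ((t : G) - (p : ℤ)^j • z) = 0 := by
          rw [map_sub, map_smul, hq]
          exact sub_eq_zero_of_eq rfl
        rwa [Submodule.mkQ_apply, Submodule.Quotient.mk_eq_zero] at h0
      obtain ⟨w, -, hw⟩ := (mem_psmul _ _ _).mp this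
      set v : G := z + (p : ℤ)^(n - j) • w with hv
      have htv : (t : G) = (p : ℤ)^j • v := by
        rw [hv, smul_add, smul_smul, ← pow_add, Nat.add_sub_cancel' hjn, hw]
        abel
      have hvT : v ∈ T := by
        obtain ⟨m, hm⟩ := (hTZ (t : G)).mp t.2
        refine (hTZ v).mpr ⟨m + j, ?_⟩
        rw [pow_add, mul_smul, ← htv, hm]
      have : φ t = (p : ℤ)^j • φ ⟨v, hvT⟩ := by
        show P.mkQ (t : G) = (p : ℤ)^j • P.mkQ v
        rw [← map_smul, ← htv]
      rw [this]
      exact Submodule.smul_mem_pointwise_smul _ _ _ (LinearMap.mem_range_self φ _)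
    · obtain ⟨q, -, hq⟩ := (mem_psmul _ _ _).mp hxj
      have : x = 0 := by
        rw [← hq, ← Nat.sub_add_cancel (le_of_lt hnj), pow_add, mul_smul,
          hQbd q, smul_zero]
      rw [this]
      exact Submodule.zero_mem _
  obtain ⟨C, -, hSC, hSCsup⟩ := splitting p hp Q n ⊤ S le_top (fun x _ => hQbd x) hpureS
  have hcompl : IsCompl S C := ⟨disjoint_iff.mpr hSC, codisjoint_iff.mpr hSCsup⟩
  set π : Q →ₗ[ℤ] S := Submodule.linearProjOfIsCompl S C hcompl with hπ
  set e : Tm ≃ₗ[ℤ] S := LinearEquiv.ofInjective φ hφinj with he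
  set ψ : G →ₗ[ℤ] G :=
    Tm.subtype ∘ₗ (e.symm : S →ₗ[ℤ] Tm) ∘ₗ π ∘ₗ P.mkQ with hψ
  have hψT : ∀ x : G, ψ x ∈ T := fun x => (e.symm (π (P.mkQ x))).2
  have hψt : ∀ t : G, t ∈ T → ψ t = t := by
    intro t ht
    have hmem : P.mkQ t ∈ S := ⟨⟨t, ht⟩, rfl⟩
    have h1 : π (P.mkQ t) = e ⟨t, ht⟩ := by
      apply Subtype.ext
      have := Submodule.linearProjOfIsCompl_apply_left hcompl (⟨P.mkQ t, hmem⟩ : S)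
      rw [hπ]
      exact congrArg Subtype.val this
    rw [hψ]
    simp only [LinearMap.comp_apply, LinearEquiv.coe_coe, Submodule.subtype_apply]
    rw [h1, LinearEquiv.symm_apply_apply]
  -- the endomorphism
  set f : G →+ G := AddMonoidHom.mk' (fun x => p • x + ψ x)
    (by intro a b; simp only [smul_add, map_add]; abel) with hf
  have hfapp : ∀ x : G, f x = p • x + ψ x := fun x => rfl
  have hinj : Function.Injective f := by
    rw [injective_iff_map_eq_zero]
    intro x hx
    rw [hfapp] at hx
    have hpx : p • x ∈ T := by
      have : p • x = -ψ x := by linear_combination (norm := abel) hx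
      rw [this]
      exact T.neg_mem (hψT x)
    have hxT : x ∈ T := by
      obtain ⟨m, hm⟩ := (hT _).mp hpx
      refine (hT x).mpr ⟨m + 1, ?_⟩
      rw [pow_succ, mul_smul]
      exact hm
    have hx' : (p + 1) • x = 0 := by
      rw [add_nsmul, one_nsmul]
      rw [hψt x hxT] at hx
      exact hx
    have ho1 : addOrderOf x ∣ p + 1 := addOrderOf_dvd_of_nsmul_eq_zero hx'
    have ho2 : addOrderOf x ∣ p ^ n := addOrderOf_dvd_of_nsmul_eq_zero (hk x hxT)
    have hcop1 : Nat.Coprime (p + 1) p := by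
      rw [add_comm]
      exact Nat.coprime_add_self_left.mpr (Nat.coprime_one_left p)
    have hcop : Nat.Coprime (p + 1) (p ^ n) := hcop1.pow_right n
    have hd : addOrderOf x ∣ Nat.gcd (p + 1) (p ^ n) := Nat.dvd_gcd ho1 ho2
    rw [Nat.coprime_iff_gcd_eq_one] at hcop
    rw [hcop, Nat.dvd_one] at hd
    exact AddMonoid.addOrderOf_eq_one_iff.mp hd
  push_neg at hdiv
  obtain ⟨x₀, hx₀⟩ := hdiv
  obtain ⟨a, rfl⟩ := QuotientAddGroup.mk'_surjective T x₀
  obtain ⟨x, hx⟩ := hco f hinj a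
  apply hx₀ (QuotientAddGroup.mk' T x)
  rw [← hx, hfapp]
  rw [map_add, map_nsmul]
  have : QuotientAddGroup.mk' T (ψ x) = 0 := (QuotientAddGroup.eq_zero_iff _).mpr (hψT x)
  rw [this, add_zero]
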